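/- Assume Ω = 0, z ≠ 0 and σ = 0. Then W ∘ W ∘ W = 0 and W ∘ W ≠ 0, i.e. W is nilpotent with minimal polynomial of degree three. (The algebraic content of case (ii) of Theorem 4 and of Proposition 3 of the paper: Petrov–Bel type III, with Weyl tensor 𝒲 = 𝒰⊗̃𝒵 and 𝒵 the null eigenbivector.) -/

import Mathlib

open Module LinearMap

noncomputable section

/-- The endomorphism `W(x) := 3Ω·B(u,x)·u + Ω·x + B(u,x)·z + B(z,x)·u` of `V`,
representing the self-dual Weyl tensor `𝒲 = 3Ω·𝒰⊗𝒰 + Ω·𝒢 + 𝒰⊗̃𝒵` of a space-time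
admitting a 2+2 umbilical structure acting on self-dual bivectors. -/
def Wmap {V : Type*} [AddCommGroup V] [Module ℂ V]
    (B : LinearMap.BilinForm ℂ V) (Ω : ℂ) (u z : V) : V →ₗ[ℂ] V :=
  (3 * Ω) • (B u).smulRight u + Ω • LinearMap.id + (B u).smulRight z + (B z).smulRight u

end

/-- Theorem 4 case (ii) and Proposition 3, type III: if `Ω = 0`,
`z ≠ 0` and `σ = 0` then `W∘W∘W = 0` and `W∘W ≠ 0`. -/
theorem typeIII_case
    {V : Type*} [AddCommGroup V] [Module ℂ V] [FiniteDimensional ℂ V]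
    (hdim : finrank ℂ V = 3)
    (B : LinearMap.BilinForm ℂ V) (hBsym : ∀ x y, B x y = B y x)
    (hBnd : B.Nondegenerate)
    (Ω : ℂ) (u z : V) (hu : B u u = -1) (huz : B u z = 0)
    (hΩ : Ω = 0) (hz : z ≠ 0) (hσ : B z z = 0) :
    Wmap B Ω u z ∘ₗ Wmap B Ω u z ∘ₗ Wmap B Ω u z = 0 ∧
    Wmap B Ω u z ∘ₗ Wmap B Ω u z ≠ 0 := by
  subst hΩ
  have hW : ∀ x, Wmap B 0 u z x = B u x • z + B z x • u := by
    intro x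
    simp [Wmap]
  have hzu : B z u = 0 := by rw [hBsym]; exact huz
  have hW2 : ∀ x, Wmap B 0 u z (Wmap B 0 u z x) = -(B z x) • z := by
    intro x
    rw [hW x, hW]
    simp [hu, huz, hzu, hσ, neg_smul]
  constructor
  · ext x
    simp only [LinearMap.comp_apply, LinearMap.zero_apply]
    rw [hW2, hW]
    simp [hσ, hzu]
  · intro h
    apply hz
    apply hBnd.1 z
    intro n
    have := congrArg (fun f => f n) h
    simp only [LinearMap.comp_apply, LinearMap.zero_apply] at this
    rw [hW2 n] at this
    have h2 : (B z) n • z = 0 := by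
      have := congrArg Neg.neg this
      simpa [neg_smul] using this
    rcases smul_eq_zero.mp h2 with h3 | h3
    · exact h3
    · exact absurd h3 hz
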